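/- Suppose the holomorphic function $\mathcal{G}^{(0)}(z,w)$ satisfies, for $(z,w)$ in a product domain, the equation $(R(w) - R(-z))\,\mathcal{G}^{(0)}(z,w) = 1 + \frac{\lambda}{N}\sum_{k=1}^d r_k \frac{\mathcal{G}^{(0)}(\varepsilon_k, w)}{R(\varepsilon_k) - R(z)}$, and that for each fixed $w$ and each $l = 1,\dots,d$, the substitution $z = -\hat w^l$ is admissible with $\mathcal{G}^{(0)}(-\hat w^l, w)$ finite and $R(-\hat w^l) \neq \infty$, where $R(\hat w^l) = R(w)$. If moreover the $2d$ values $R(-\hat w^1),\dots,R(-\hat w^d), R(\varepsilon_1),\dots,R(\varepsilon_d)$ are pairwise distinct, then for each $k$: $\frac{\lambda}{N} r_k\, \mathcal{G}^{(0)}(\varepsilon_k, w) = -\frac{\prod_{j=1}^d (R(\varepsilon_k) - R(-\hat w^j))}{\prod_{j=1, j\neq k}^d (R(\varepsilon_k) - R(\varepsilon_j))}$. -/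
import Mathlib


open Finset Polynomial

/-- Solving the functional equation at the special points `z = -ŵˡ`: if
`(R(w)-R(-z))𝒢(z,w) = 1 + (λ/N)∑ₖ rₖ 𝒢(εₖ,w)/(R(εₖ)-R(z))` holds at
`z = -ŵˡ` for `l = 1,…,d`, where `R(ŵˡ) = R(w)`, and the `2d` values
`R(-ŵ¹),…,R(-ŵ^d), R(ε₁),…,R(ε_d)` are pairwise distinct, then
`(λ/N) rₖ 𝒢(εₖ,w) = -∏ⱼ(R(εₖ)-R(-ŵʲ)) / ∏_{j≠k}(R(εₖ)-R(εⱼ))`. -/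
theorem cauchy_inversion_for_G (d : ℕ) (lam N : ℝ) (hlam : 0 < lam)
    (hN : 0 < N) (r : Fin d → ℝ) (hr : ∀ k, 0 < r k)
    (R : ℂ → ℂ) (ε : Fin d → ℂ) (G : ℂ → ℂ → ℂ) (w : ℂ) (wh : Fin d → ℂ)
    (hwh : ∀ l, R (wh l) = R w)
    (heq : ∀ l, (R w - R (wh l)) * G (-wh l) w
      = 1 + (lam : ℂ) / (N : ℂ) * ∑ k, (r k : ℂ) * G (ε k) w / (R (ε k) - R (-wh l)))
    (hdist : Function.Injective
      (Sum.elim (fun j => R (-wh j)) (fun i => R (ε i)) : Fin d ⊕ Fin d → ℂ)) :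
    ∀ k, (lam : ℂ) / (N : ℂ) * (r k : ℂ) * G (ε k) w
      = -(∏ j, (R (ε k) - R (-wh j))) / ∏ j ∈ univ.erase k, (R (ε k) - R (ε j)) := by
  classical
  intro k
  set a : Fin d → ℂ := fun j => R (-wh j) with ha
  set b : Fin d → ℂ := fun i => R (ε i) with hb
  set x : Fin d → ℂ := fun i => (lam : ℂ) / (N : ℂ) * (r i : ℂ) * G (ε i) w with hx
  have hab : ∀ i j, b i ≠ a j := by
    intro i j h
    exact absurd (hdist (a₁ := Sum.inr i) (a₂ := Sum.inl j) h) (by simp)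
  have hainj : Function.Injective a := by
    intro i j h
    have := hdist (a₁ := Sum.inl i) (a₂ := Sum.inl j) h
    simpa using this
  have hbinj : ∀ i j, i ≠ j → b i ≠ b j := by
    intro i j hij h
    have := hdist (a₁ := Sum.inr i) (a₂ := Sum.inr j) h
    simp at this
    exact hij this
  -- the linear system
  have hsys : ∀ l, ∑ i, x i / (b i - a l) = -1 := by
    intro l
    have h0 := heq l
    rw [hwh l, sub_self, zero_mul] at h0
    have h1 : (lam : ℂ) / (N : ℂ) * ∑ i, (r i : ℂ) * G (ε i) w / (b i - a l) = -1 := by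
      linear_combination -h0
    rw [← h1, mul_sum]
    refine Finset.sum_congr rfl fun i _ => ?_
    simp only [hx]
    ring
  -- polynomials
  set Pb : Polynomial ℂ := ∏ j, (X - C (b j)) with hPb
  set Pa : Polynomial ℂ := ∏ j, (X - C (a j)) with hPa
  set S : Polynomial ℂ := ∑ i, C (x i) * ∏ j ∈ univ.erase i, (X - C (b j)) with hS
  set D : Polynomial ℂ := Pb - Pa - S with hD
  have hPbm : Pb.Monic := monic_prod_of_monic _ _ fun j _ => monic_X_sub_C _
  have hPam : Pa.Monic := monic_prod_of_monic _ _ fun j _ => monic_X_sub_C _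
  have hPbdeg : Pb.natDegree = d := by
    rw [hPb, natDegree_prod _ _ fun i _ => X_sub_C_ne_zero (b i)]
    simp [natDegree_X_sub_C]
  have hPadeg : Pa.natDegree = d := by
    rw [hPa, natDegree_prod _ _ fun i _ => X_sub_C_ne_zero (a i)]
    simp [natDegree_X_sub_C]
  have hd1 : 1 ≤ d := Nat.one_le_iff_ne_zero.mpr (by rintro rfl; exact k.elim0)
  have hDdeg : D.degree < (d : ℕ) := by
    have h1 : (Pb - Pa).degree < (d : ℕ) := by
      rcases eq_or_ne Pb Pa with h | h
      · rw [h, sub_self, degree_zero]; exact WithBot.bot_lt_coe (d : ℕ)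
      · have hdeq : Pb.degree = Pa.degree := by
          rw [degree_eq_natDegree hPbm.ne_zero, degree_eq_natDegree hPam.ne_zero, hPbdeg, hPadeg]
        have := degree_sub_lt hdeq hPbm.ne_zero
          (by simp [hPbm.leadingCoeff, hPam.leadingCoeff])
        rwa [degree_eq_natDegree hPbm.ne_zero, hPbdeg] at this
    have h2 : S.degree < (d : ℕ) := by
      refine lt_of_le_of_lt (degree_sum_le _ _) ?_
      rw [Finset.sup_lt_iff (by exact_mod_cast WithBot.bot_lt_coe (d : ℕ))]
      intro i _
      refine lt_of_le_of_lt (degree_mul_le _ _) ?_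
      have hprod : (∏ j ∈ univ.erase i, (X - C (b j))).degree ≤ ((d - 1 : ℕ) : WithBot ℕ) := by
        refine le_trans (degree_prod_le _ _) ?_
        simp only [degree_X_sub_C]
        rw [Finset.sum_const, card_erase_of_mem (mem_univ i), card_univ, Fintype.card_fin]
        simp
      calc (C (x i)).degree + (∏ j ∈ univ.erase i, (X - C (b j))).degree
          ≤ 0 + ((d - 1 : ℕ) : WithBot ℕ) := add_le_add degree_C_le hprod
        _ = ((d - 1 : ℕ) : WithBot ℕ) := by rw [zero_add]
        _ < (d : ℕ) := by exact_mod_cast Nat.sub_lt (Nat.lt_of_lt_of_le Nat.zero_lt_one hd1) Nat.zero_lt_one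
    calc D.degree ≤ max (Pb - Pa).degree S.degree := degree_sub_le _ _
      _ < (d : ℕ) := max_lt h1 h2
  -- D vanishes at the d points a l
  have hDeval : ∀ l, D.eval (a l) = 0 := by
    intro l
    have hPbval : Pb.eval (a l) = ∏ j, (a l - b j) := by
      simp [hPb, eval_prod]
    have hSval : S.eval (a l) = ∑ i, x i * ∏ j ∈ univ.erase i, (a l - b j) := by
      simp [hS, eval_finset_sum, eval_prod]
    have key : ∑ i, x i * ∏ j ∈ univ.erase i, (a l - b j) = ∏ j, (a l - b j) := by
      have := hsys l
      calc ∑ i, x i * ∏ j ∈ univ.erase i, (a l - b j)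
          = ∑ i, (x i / (b i - a l)) * (-∏ j, (a l - b j)) := by
            refine Finset.sum_congr rfl fun i _ => ?_
            rw [← Finset.prod_erase_mul _ _ (mem_univ i)]
            have hne : b i - a l ≠ 0 := sub_ne_zero.mpr (hab i l)
            field_simp
            ring
        _ = (∑ i, x i / (b i - a l)) * (-∏ j, (a l - b j)) := by rw [← Finset.sum_mul]
        _ = ∏ j, (a l - b j) := by rw [this]; ring
    have hPaval : Pa.eval (a l) = 0 := by
      simp only [hPa, eval_prod, eval_sub, eval_X, eval_C]
      exact Finset.prod_eq_zero (mem_univ l) (by simp)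
    simp only [hD, eval_sub, hPbval, hPaval, hSval, key]
    ring
  -- hence D = 0
  have hD0 : D = 0 := by
    by_cases h : D = 0
    · exact h
    · refine eq_zero_of_natDegree_lt_card_of_eval_eq_zero D hainj hDeval ?_
      rw [Fintype.card_fin]
      exact natDegree_lt_iff_degree_lt h |>.mpr hDdeg
  -- evaluate at b k
  have hevalk : D.eval (b k) = 0 := by rw [hD0]; simp
  have hPbk : Pb.eval (b k) = 0 := by
    simp only [hPb, eval_prod, eval_sub, eval_X, eval_C]
    exact Finset.prod_eq_zero (mem_univ k) (by simp)
  have hSk : S.eval (b k) = x k * ∏ j ∈ univ.erase k, (b k - b j) := by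
    simp only [hS, eval_finset_sum, eval_mul, eval_C, eval_prod, eval_sub, eval_X]
    rw [Finset.sum_eq_single k]
    · intro i _ hik
      refine mul_eq_zero_of_right _ (Finset.prod_eq_zero (Finset.mem_erase.mpr ⟨(Ne.symm hik), mem_univ k⟩) (by simp))
    · intro h; exact absurd (mem_univ k) h
  have hPak : Pa.eval (b k) = ∏ j, (b k - a j) := by simp [hPa, eval_prod]
  rw [hD, eval_sub, eval_sub, hPbk, hPak, hSk] at hevalk
  have hprodne : ∏ j ∈ univ.erase k, (b k - b j) ≠ 0 := by
    refine Finset.prod_ne_zero_iff.mpr fun j hj => ?_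
    exact sub_ne_zero.mpr (hbinj k j (Finset.mem_erase.mp hj).1.symm)
  have : x k = -(∏ j, (b k - a j)) / ∏ j ∈ univ.erase k, (b k - b j) := by
    field_simp
    linear_combination -hevalk
  simpa [hx, ha, hb] using this
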